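/- Let n ≥ 4 and m > 0. For f in the Schwartz space of ℝ with real values, define Q(f) = ∫₀^∞ dα ∫₀^∞ dk · (k^{n−2}/ω(k)) · ((1−2ξ)ω(k)² + 2ξα²) · |f̂(α + ω(k))|², where ω(k) = √(k² + m²) and ξ ∈ [0, 1/4]. Then Q(f) is finite and nonnegative. -/

import Mathlib

open MeasureTheory Real FourierTransform SchwartzMap

set_option maxHeartbeats 1000000

private lemma qei_scalar_bound (n : ℕ) (hn : 2 ≤ n) (m ξ α k ω A C C0 : ℝ)
    (hm : 0 < m) (hξ0 : 0 ≤ ξ) (hξ4 : ξ ≤ 1 / 4) (hα : 0 < α) (hk : 0 < k)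
    (hmω : m ≤ ω) (hkω : k ≤ ω) (hA0 : 0 ≤ A) (hCpos : 0 < C)
    (h2 : (α + ω) ^ (n + 4) * A ≤ C) (h1 : A ≤ C0) :
    k ^ (n - 2) / ω * ((1 - 2 * ξ) * ω ^ 2 + 2 * ξ * α ^ 2) * A ^ 2
      ≤ ((1 + m⁻¹) ^ 4 * (C * C0) / m) * ((1 + α ^ 2)⁻¹ * (1 + k ^ 2)⁻¹) := by
  have hω0 : 0 < ω := lt_of_lt_of_le hm hmω
  set y := α + ω with hydef
  have hy0 : 0 < y := add_pos hα hω0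
  have hαy : α ≤ y := le_add_of_nonneg_right hω0.le
  have hωy : ω ≤ y := le_add_of_nonneg_left hα.le
  have hky : k ≤ y := hkω.trans hωy
  have hWn : 0 ≤ (1 - 2 * ξ) * ω ^ 2 + 2 * ξ * α ^ 2 :=
    add_nonneg (mul_nonneg (by linarith) (sq_nonneg _))
      (mul_nonneg (by linarith) (sq_nonneg _))
  have step1 : k ^ (n - 2) / ω * ((1 - 2 * ξ) * ω ^ 2 + 2 * ξ * α ^ 2) * A ^ 2
      ≤ (y ^ (n - 2) / m) * y ^ 2 * A ^ 2 := by
    have hk1 : k ^ (n - 2) ≤ y ^ (n - 2) := pow_le_pow_left₀ hk.le hky _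
    have hd : k ^ (n - 2) / ω ≤ y ^ (n - 2) / m :=
      div_le_div₀ (pow_nonneg hy0.le _) hk1 hm hmω
    have hWy : (1 - 2 * ξ) * ω ^ 2 + 2 * ξ * α ^ 2 ≤ y ^ 2 := by
      rw [hydef]
      nlinarith [mul_nonneg (show (0:ℝ) ≤ 1 - 2 * ξ by linarith) (sq_nonneg α),
        mul_nonneg hξ0 (sq_nonneg ω), mul_pos hα hω0]
    exact mul_le_mul_of_nonneg_right
      (mul_le_mul hd hWy hWn (div_nonneg (pow_nonneg hy0.le _) hm.le)) (sq_nonneg A)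
  have step2 : (y ^ (n - 2) / m) * y ^ 2 * A ^ 2 = y ^ n * A ^ 2 / m := by
    have hpw : y ^ (n - 2) * y ^ 2 = y ^ n := by
      rw [← pow_add]
      congr 1
      omega
    rw [← hpw]
    ring
  have hP : (1 + α ^ 2) * (1 + k ^ 2) * (y ^ n * A ^ 2) ≤ (1 + m⁻¹) ^ 4 * (C * C0) := by
    have e1 : 1 + α ^ 2 ≤ (1 + y) ^ 2 := by nlinarith
    have e2 : 1 + k ^ 2 ≤ (1 + y) ^ 2 := by nlinarith
    have e3 : 1 + y ≤ (1 + m⁻¹) * y := by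
      have h1m : 1 ≤ m⁻¹ * y := by
        rw [← div_eq_inv_mul]
        exact (one_le_div hm).2 (hmω.trans hωy)
      nlinarith
    calc (1 + α ^ 2) * (1 + k ^ 2) * (y ^ n * A ^ 2)
        ≤ (1 + y) ^ 2 * (1 + y) ^ 2 * (y ^ n * A ^ 2) := by
          refine mul_le_mul_of_nonneg_right
            (mul_le_mul e1 e2 (by positivity) (by positivity)) (by positivity)
      _ = (1 + y) ^ 4 * (y ^ n * A ^ 2) := by ring
      _ ≤ ((1 + m⁻¹) * y) ^ 4 * (y ^ n * A ^ 2) := by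
          refine mul_le_mul_of_nonneg_right
            (pow_le_pow_left₀ (by linarith) e3 4) (by positivity)
      _ = (1 + m⁻¹) ^ 4 * ((y ^ (n + 4) * A) * A) := by
          rw [mul_pow, pow_add]; ring
      _ ≤ (1 + m⁻¹) ^ 4 * (C * C0) := by
          refine mul_le_mul_of_nonneg_left (mul_le_mul h2 h1 hA0 hCpos.le) (by positivity)
  have hq : (0:ℝ) < (1 + α ^ 2) * (1 + k ^ 2) := by positivity
  have key : y ^ n * A ^ 2 ≤ ((1 + m⁻¹) ^ 4 * (C * C0)) * ((1 + α ^ 2)⁻¹ * (1 + k ^ 2)⁻¹) := by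
    rw [show (1 + α ^ 2)⁻¹ * (1 + k ^ 2)⁻¹ = ((1 + α ^ 2) * (1 + k ^ 2))⁻¹ from
      (mul_inv _ _).symm, ← div_eq_mul_inv, le_div_iff₀ hq]
    calc y ^ n * A ^ 2 * ((1 + α ^ 2) * (1 + k ^ 2))
        = (1 + α ^ 2) * (1 + k ^ 2) * (y ^ n * A ^ 2) := by ring
      _ ≤ _ := hP
  calc k ^ (n - 2) / ω * ((1 - 2 * ξ) * ω ^ 2 + 2 * ξ * α ^ 2) * A ^ 2
      ≤ (y ^ (n - 2) / m) * y ^ 2 * A ^ 2 := step1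
    _ = y ^ n * A ^ 2 / m := step2
    _ ≤ ((1 + m⁻¹) ^ 4 * (C * C0)) * ((1 + α ^ 2)⁻¹ * (1 + k ^ 2)⁻¹) / m :=
        (div_le_div_iff_of_pos_right hm).2 key
    _ = ((1 + m⁻¹) ^ 4 * (C * C0) / m) * ((1 + α ^ 2)⁻¹ * (1 + k ^ 2)⁻¹) := by ring

theorem QEI_state_independent_term_finite (n : ℕ) (hn : 4 ≤ n) (m : ℝ) (hm : 0 < m)
    (ξ : ℝ) (hξ : ξ ∈ Set.Icc (0 : ℝ) (1 / 4)) (f : SchwartzMap ℝ ℝ) :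
    IntegrableOn
      (fun p : ℝ × ℝ =>
        (p.2 ^ (n - 2) / Real.sqrt (p.2 ^ 2 + m ^ 2)) *
          ((1 - 2 * ξ) * (Real.sqrt (p.2 ^ 2 + m ^ 2)) ^ 2 + 2 * ξ * p.1 ^ 2) *
          ‖FourierTransform.fourier (fun x : ℝ => (f x : ℂ))
              (p.1 + Real.sqrt (p.2 ^ 2 + m ^ 2))‖ ^ 2)
      (Set.Ioi (0 : ℝ) ×ˢ Set.Ioi (0 : ℝ)) ∧
    0 ≤ ∫ p in Set.Ioi (0 : ℝ) ×ˢ Set.Ioi (0 : ℝ),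
        (p.2 ^ (n - 2) / Real.sqrt (p.2 ^ 2 + m ^ 2)) *
          ((1 - 2 * ξ) * (Real.sqrt (p.2 ^ 2 + m ^ 2)) ^ 2 + 2 * ξ * p.1 ^ 2) *
          ‖FourierTransform.fourier (fun x : ℝ => (f x : ℂ))
              (p.1 + Real.sqrt (p.2 ^ 2 + m ^ 2))‖ ^ 2 := by
  obtain ⟨hξ0, hξ4⟩ := hξ
  -- complexification of f and its Fourier transform, as Schwartz maps
  set g : SchwartzMap ℝ ℂ := SchwartzMap.bilinLeftCLM
      (ContinuousLinearMap.lsmul ℝ ℝ : ℝ →L[ℝ] ℂ →L[ℝ] ℂ)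
      (Function.HasTemperateGrowth.const (1 : ℂ)) f with hgdef
  have hg : ∀ x, g x = (f x : ℂ) := by
    intro x
    show (ContinuousLinearMap.lsmul ℝ ℝ (f x)) (1 : ℂ) = (f x : ℂ)
    simp [Complex.real_smul]
  set F : SchwartzMap ℝ ℂ := fourierTransformCLM ℝ g with hFdef
  have hFT : FourierTransform.fourier (fun x : ℝ => (f x : ℂ)) = ⇑F := by
    have hcoe : (fun x : ℝ => (f x : ℂ)) = ⇑g := funext fun x => (hg x).symm
    rw [hcoe]; rfl
  clear_value F
  clear hFdef hgdef hg g
  obtain ⟨C, hCpos, hC⟩ := F.decay (n + 4) 0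
  obtain ⟨C0, hC0pos, hC0⟩ := F.decay 0 0
  have hC' : ∀ y : ℝ, 0 ≤ y → y ^ (n + 4) * ‖F y‖ ≤ C := by
    intro y hy
    have := hC y
    simpa [norm_iteratedFDeriv_zero, Real.norm_of_nonneg hy] using this
  have hC0' : ∀ y : ℝ, ‖F y‖ ≤ C0 := by
    intro y
    have := hC0 y
    simpa [norm_iteratedFDeriv_zero] using this
  clear hC hC0
  simp only [hFT]
  set s : Set (ℝ × ℝ) := Set.Ioi (0 : ℝ) ×ˢ Set.Ioi (0 : ℝ) with hs
  set D : ℝ := (1 + m⁻¹) ^ 4 * (C * C0) / m with hD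
  -- pointwise nonnegativity
  have hnonneg : ∀ p : ℝ × ℝ, p ∈ s →
      0 ≤ (p.2 ^ (n - 2) / Real.sqrt (p.2 ^ 2 + m ^ 2)) *
          ((1 - 2 * ξ) * (Real.sqrt (p.2 ^ 2 + m ^ 2)) ^ 2 + 2 * ξ * p.1 ^ 2) *
          ‖F (p.1 + Real.sqrt (p.2 ^ 2 + m ^ 2))‖ ^ 2 := by
    intro p hp
    obtain ⟨hα, hk⟩ := hp
    rw [Set.mem_Ioi] at hα hk
    refine mul_nonneg (mul_nonneg (div_nonneg (pow_nonneg (le_of_lt hk) _)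
      (Real.sqrt_nonneg _)) ?_) (pow_nonneg (norm_nonneg _) 2)
    exact add_nonneg (mul_nonneg (by linarith) (sq_nonneg _))
      (mul_nonneg (by linarith) (sq_nonneg _))
  -- pointwise bound by an integrable function
  have hbound : ∀ p : ℝ × ℝ, p ∈ s →
      (p.2 ^ (n - 2) / Real.sqrt (p.2 ^ 2 + m ^ 2)) *
          ((1 - 2 * ξ) * (Real.sqrt (p.2 ^ 2 + m ^ 2)) ^ 2 + 2 * ξ * p.1 ^ 2) *
          ‖F (p.1 + Real.sqrt (p.2 ^ 2 + m ^ 2))‖ ^ 2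
        ≤ D * ((1 + p.1 ^ 2)⁻¹ * (1 + p.2 ^ 2)⁻¹) := by
    intro p hp
    obtain ⟨hα, hk⟩ := hp
    rw [Set.mem_Ioi] at hα hk
    have hmω : m ≤ Real.sqrt (p.2 ^ 2 + m ^ 2) := by
      conv_lhs => rw [← Real.sqrt_sq hm.le]
      exact Real.sqrt_le_sqrt (by nlinarith [sq_nonneg p.2])
    have hkω : p.2 ≤ Real.sqrt (p.2 ^ 2 + m ^ 2) := by
      conv_lhs => rw [← Real.sqrt_sq (le_of_lt hk)]
      exact Real.sqrt_le_sqrt (by nlinarith [sq_nonneg m])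
    exact qei_scalar_bound n (by omega) m ξ p.1 p.2 (Real.sqrt (p.2 ^ 2 + m ^ 2))
      (‖F (p.1 + Real.sqrt (p.2 ^ 2 + m ^ 2))‖) C C0 hm hξ0 hξ4 hα hk hmω hkω
      (norm_nonneg _) hCpos
      (hC' _ (by positivity)) (hC0' _)
  -- continuity, hence measurability
  have hsc : Continuous fun p : ℝ × ℝ => Real.sqrt (p.2 ^ 2 + m ^ 2) :=
    ((continuous_snd.pow 2).add continuous_const).sqrt
  have hcont : Continuous (fun p : ℝ × ℝ =>
      (p.2 ^ (n - 2) / Real.sqrt (p.2 ^ 2 + m ^ 2)) *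
        ((1 - 2 * ξ) * (Real.sqrt (p.2 ^ 2 + m ^ 2)) ^ 2 + 2 * ξ * p.1 ^ 2) *
        ‖F (p.1 + Real.sqrt (p.2 ^ 2 + m ^ 2))‖ ^ 2) := by
    have hsne : ∀ p : ℝ × ℝ, Real.sqrt (p.2 ^ 2 + m ^ 2) ≠ 0 := fun p =>
      ne_of_gt (Real.sqrt_pos.2 (add_pos_of_nonneg_of_pos (sq_nonneg _) (pow_pos hm 2)))
    refine (((continuous_snd.pow _).div hsc hsne).mul ?_).mul ?_
    · exact (continuous_const.mul (hsc.pow 2)).add (continuous_const.mul (continuous_fst.pow 2))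
    · exact ((F.continuous.comp (continuous_fst.add hsc)).norm.pow 2)
  have hmeas : MeasurableSet s := measurableSet_Ioi.prod measurableSet_Ioi
  -- integrability of the dominating function
  have hG : IntegrableOn (fun p : ℝ × ℝ => D * ((1 + p.1 ^ 2)⁻¹ * (1 + p.2 ^ 2)⁻¹)) s := by
    have h1 : Integrable (fun x : ℝ => (1 + x ^ 2)⁻¹) := integrable_inv_one_add_sq
    have h2 : Integrable (fun p : ℝ × ℝ => (1 + p.1 ^ 2)⁻¹ * (1 + p.2 ^ 2)⁻¹)
        (volume.prod volume) := h1.mul_prod h1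
    rw [← MeasureTheory.Measure.volume_eq_prod] at h2
    exact (h2.const_mul D).integrableOn
  constructor
  · refine hG.mono' hcont.aestronglyMeasurable.restrict ?_
    rw [ae_restrict_iff' hmeas]
    refine Filter.Eventually.of_forall fun p hp => ?_
    rw [Real.norm_of_nonneg (hnonneg p hp)]
    exact hbound p hp
  · exact setIntegral_nonneg hmeas hnonneg
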